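/- arXiv:2011.06362 — 3 statements merged into one kernel-verified Lean document; each statement's English description precedes it below -/
import Mathlib

section
/- Let Ω ⊂ ℝ^N be a bounded C² domain, α > −1, γ > 0, let F be uniformly elliptic and positively homogeneous, c, h, p continuous and bounded with p > 0 on the closure of Ω, and assume λ₁^c > 0 with positive eigenfunction ψ₁ (a positive viscosity solution of |∇ψ₁|^α(F(D²ψ₁)+h·∇ψ₁) + (c(x)+λ₁^c)ψ₁^{1+α} = 0 in Ω, ψ₁ = 0 on ∂Ω). Set δ₀ = 2^{−γ/(1+α+γ)}(min p / λ₁^c)^{1/(1+α+γ)} and ε₀ = 2^{−γ/(1+α+γ)}|ψ₁|_∞^{−1}(min p / λ₁^c)^{1/(1+α+γ)}. Then for every ε < ε₀ and every δ ∈ [0,δ₀], the function u_* = εψ₁ is a viscosity sub-solution of |∇u|^α(F(D²u)+h(x)·∇u) + c(x)u^{1+α} + p(x)(u+δ)^{−γ} = 0 in Ω with u = 0 on ∂Ω. -/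
open Real Set Metric Filter Topology Bornology RealInnerProductSpace

noncomputable section

/-- Euclidean space `ℝ^N`. -/
abbrev Euc (N : ℕ) := EuclideanSpace ℝ (Fin N)

/-- The Hessian matrix (matrix of second partial derivatives) of `φ` at `x`. -/
def hessianMatrix {N : ℕ} (φ : Euc N → ℝ) (x : Euc N) : Matrix (Fin N) (Fin N) ℝ :=
  fun i j =>
    fderiv ℝ (fun y => fderiv ℝ φ y (EuclideanSpace.single j 1)) x (EuclideanSpace.single i 1)

/-- `F` is uniformly elliptic: there are ellipticity constants `0 < a < A` with
`a·tr(P) ≤ F(M+P) − F(M) ≤ A·tr(P)` for every symmetric `M` and positive semidefinite `P`. -/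
def UniformlyElliptic {N : ℕ} (F : Matrix (Fin N) (Fin N) ℝ → ℝ) : Prop :=
  ∃ a A : ℝ, 0 < a ∧ a < A ∧
    ∀ M P : Matrix (Fin N) (Fin N) ℝ, P.PosSemidef →
      a * P.trace ≤ F (M + P) - F M ∧ F (M + P) - F M ≤ A * P.trace

/-- `F` is positively homogeneous of degree one: `F(tM) = t F(M)` for `t > 0`. -/
def PosHom {N : ℕ} (F : Matrix (Fin N) (Fin N) ℝ → ℝ) : Prop :=
  ∀ t : ℝ, 0 < t → ∀ M : Matrix (Fin N) (Fin N) ℝ, F (t • M) = t * F M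

/-- Viscosity sub-solution of `|∇u|^α (F(D²u) + h(x)·∇u) = g(x,u)` in `Ω`:
whenever a `C²` test function `φ` touches `u` from above at `x̄ ∈ Ω` (i.e. `u − φ` has a local
maximum at `x̄`), either `∇φ(x̄) ≠ 0` and the inequality `≥` holds, or `u` is constant on a ball
around `x̄` and `0 ≥ g(x̄, u(x̄))`. -/
def IsViscSubSol {N : ℕ} (Ω : Set (Euc N)) (α : ℝ) (F : Matrix (Fin N) (Fin N) ℝ → ℝ)
    (h : Euc N → Euc N) (g : Euc N → ℝ → ℝ) (u : Euc N → ℝ) : Prop :=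
  ∀ φ : Euc N → ℝ, ∀ x ∈ Ω, ContDiffAt ℝ 2 φ x →
    IsLocalMax (fun y => u y - φ y) x →
    (gradient φ x ≠ 0 ∧
      g x (u x) ≤
        ‖gradient φ x‖ ^ α * (F (hessianMatrix φ x) + ⟪h x, gradient φ x⟫)) ∨
    ((∃ r > 0, ∀ y ∈ ball x r, u y = u x) ∧ g x (u x) ≤ 0)

/-- Viscosity super-solution of `|∇u|^α (F(D²u) + h(x)·∇u) = g(x,u)` in `Ω`. -/
def IsViscSuperSol {N : ℕ} (Ω : Set (Euc N)) (α : ℝ) (F : Matrix (Fin N) (Fin N) ℝ → ℝ)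
    (h : Euc N → Euc N) (g : Euc N → ℝ → ℝ) (u : Euc N → ℝ) : Prop :=
  (∀ φ : Euc N → ℝ, ∀ x ∈ Ω, ContDiffAt ℝ 2 φ x →
    IsLocalMin (fun y => u y - φ y) x → gradient φ x ≠ 0 →
      ‖gradient φ x‖ ^ α * (F (hessianMatrix φ x) + ⟪h x, gradient φ x⟫) ≤ g x (u x)) ∧
  (∀ x ∈ Ω, (∃ r > 0, ∀ y ∈ ball x r, u y = u x) → 0 ≤ g x (u x))

/-- Viscosity solution: both a sub- and a super-solution. -/
def IsViscSol {N : ℕ} (Ω : Set (Euc N)) (α : ℝ) (F : Matrix (Fin N) (Fin N) ℝ → ℝ)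
    (h : Euc N → Euc N) (g : Euc N → ℝ → ℝ) (u : Euc N → ℝ) : Prop :=
  IsViscSubSol Ω α F h g u ∧ IsViscSuperSol Ω α F h g u

/-- Bounded `C²` domain: a bounded connected open set given by a global `C²` defining function
whose gradient does not vanish on the boundary. -/
def IsBoundedC2Domain {N : ℕ} (Ω : Set (Euc N)) : Prop :=
  IsOpen Ω ∧ IsBounded Ω ∧ IsConnected Ω ∧
    ∃ ρ : Euc N → ℝ, ContDiff ℝ 2 ρ ∧ Ω = {x | ρ x < 0} ∧
      ∀ x ∈ frontier Ω, gradient ρ x ≠ 0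

/-- The first (demi-)eigenvalue `λ₁^c` of `-|∇·|^α(F(D²·)+h·∇·) - c|·|^α ·` :
`sup { λ | ∃ φ > 0 in Ω which is a viscosity super-solution of
`|∇φ|^α(F(D²φ)+h(x)·∇φ) + (c(x)+λ)φ^{1+α} = 0` }`. -/
def lambda1 {N : ℕ} (Ω : Set (Euc N)) (α : ℝ) (F : Matrix (Fin N) (Fin N) ℝ → ℝ)
    (h : Euc N → Euc N) (c : Euc N → ℝ) : ℝ :=
  sSup {l : ℝ | ∃ φ : Euc N → ℝ, (∀ x ∈ Ω, 0 < φ x) ∧ LowerSemicontinuousOn φ Ω ∧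
    IsViscSuperSol Ω α F h (fun x y => -((c x + l) * y ^ (1 + α))) φ}


/-- Auxiliary: gradient of a constant multiple. -/
lemma grad_const_mul' {N : ℕ} (φ : Euc N → ℝ) (x : Euc N)
    (hφ : DifferentiableAt ℝ φ x) (k : ℝ) :
    gradient (fun y => k * φ y) x = k • gradient φ x := by
  simp [gradient, fderiv_const_mul hφ, map_smulₛₗ]

/-- Auxiliary: Hessian matrix of a constant multiple. -/
lemma hessian_const_mul' {N : ℕ} (φ : Euc N → ℝ) (x : Euc N)
    (hφ : ContDiffAt ℝ 2 φ x) (k : ℝ) :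
    hessianMatrix (fun y => k * φ y) x = k • hessianMatrix φ x := by
  funext i j
  have hev : ∀ᶠ y in 𝓝 x, DifferentiableAt ℝ φ y :=
    (hφ.eventually (by norm_num)).mono fun y hy => hy.differentiableAt (by norm_num)
  have heq : (fun y => fderiv ℝ (fun z => k * φ z) y (EuclideanSpace.single j 1))
      =ᶠ[𝓝 x] fun y => k * fderiv ℝ φ y (EuclideanSpace.single j 1) := by
    filter_upwards [hev] with y hy
    rw [fderiv_const_mul hy k]; simp
  have hdin : DifferentiableAt ℝ (fun y => fderiv ℝ φ y (EuclideanSpace.single j 1)) x := by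
    have h1 : ContDiffAt ℝ 1 (fderiv ℝ φ) x := hφ.fderiv_right le_rfl
    exact ((ContinuousLinearMap.apply ℝ ℝ
      (EuclideanSpace.single j 1)).differentiable.differentiableAt).comp x
      (h1.differentiableAt one_ne_zero)
  show fderiv ℝ (fun y => fderiv ℝ (fun z => k * φ z) y (EuclideanSpace.single j 1)) x
      (EuclideanSpace.single i 1) = (k • hessianMatrix φ x) i j
  rw [heq.fderiv_eq, fderiv_const_mul hdin k]
  simp [hessianMatrix]

/-- Auxiliary: the key numeric inequality. -/
lemma key_ineq' (lam I α γ u δ : ℝ) (hlam : 0 < lam) (hI : 0 < I)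
    (hα : 0 < 1 + α) (hγ : 0 < γ) (hu : 0 < u)
    (hud : u ≤ 2 ^ (-(γ / (1 + α + γ))) * (I / lam) ^ (1 / (1 + α + γ)))
    (hδ : 0 ≤ δ) (hδd : δ ≤ 2 ^ (-(γ / (1 + α + γ))) * (I / lam) ^ (1 / (1 + α + γ))) :
    lam * (u ^ (1 + α) * (u + δ) ^ γ) ≤ I := by
  set s := 1 + α + γ with hs
  have hspos : 0 < s := by positivity
  set δ₀ : ℝ := 2 ^ (-(γ / s)) * (I / lam) ^ (1 / s) with hδ₀
  have hδ₀pos : 0 < δ₀ := by positivity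
  have he1 : -(γ / s) * s = -γ := by field_simp
  have he2 : 1 / s * s = 1 := by field_simp
  have hδ₀s : δ₀ ^ s = 2 ^ (-γ) * (I / lam) := by
    rw [hδ₀, mul_rpow (by positivity) (by positivity),
      ← Real.rpow_mul (by norm_num : (0:ℝ) ≤ 2), ← Real.rpow_mul (by positivity),
      he1, he2, rpow_one]
  have h1 : u ^ (1 + α) ≤ δ₀ ^ (1 + α) := rpow_le_rpow hu.le hud hα.le
  have h2 : (u + δ) ^ γ ≤ (2 * δ₀) ^ γ := by
    apply rpow_le_rpow (by positivity) _ hγ.le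
    calc u + δ ≤ δ₀ + δ₀ := add_le_add hud hδd
    _ = 2 * δ₀ := by ring
  have h3 : u ^ (1 + α) * (u + δ) ^ γ ≤ δ₀ ^ (1 + α) * (2 * δ₀) ^ γ :=
    mul_le_mul h1 h2 (by positivity) (by positivity)
  have h4 : δ₀ ^ (1 + α) * (2 * δ₀) ^ γ = 2 ^ γ * δ₀ ^ s := by
    have hsplit : δ₀ ^ s = δ₀ ^ (1 + α) * δ₀ ^ γ := by
      rw [hs]; exact Real.rpow_add hδ₀pos _ _
    rw [mul_rpow (by norm_num : (0:ℝ) ≤ 2) hδ₀pos.le, hsplit]; ring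
  have h2γ : (2:ℝ) ^ γ * 2 ^ (-γ) = 1 := by
    rw [← Real.rpow_add (by norm_num : (0:ℝ) < 2)]; simp
  have h5 : lam * (2 ^ γ * δ₀ ^ s) = I := by
    rw [hδ₀s, show lam * (2 ^ γ * (2 ^ (-γ) * (I / lam))) =
      (2 ^ γ * 2 ^ (-γ)) * (lam * (I / lam)) from by ring, h2γ, one_mul,
      mul_div_cancel₀ _ hlam.ne']
  calc lam * (u ^ (1 + α) * (u + δ) ^ γ) ≤ lam * (2 ^ γ * δ₀ ^ s) := by
        rw [← h4]; exact mul_le_mul_of_nonneg_left h3 hlam.le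
  _ = I := h5

/-- Lemma 3.2: with `ψ₁` a positive eigenfunction for `λ₁^c`, and
`δ₀ = 2^{−γ/(1+α+γ)}(min p/λ₁^c)^{1/(1+α+γ)}`, `ε₀ = δ₀/|ψ₁|_∞`, for every `0 < ε < ε₀` and
`δ ∈ [0, δ₀]`, `u_* = εψ₁` is a viscosity sub-solution of the regularized problem
`|∇u|^α(F(D²u)+h·∇u) + c u^{1+α} + p (u+δ)^{−γ} = 0`. -/
theorem statement3 {N : ℕ} (Ω : Set (Euc N)) (hΩ : IsBoundedC2Domain Ω)
    (α γ : ℝ) (hα : -1 < α) (hγ : 0 < γ)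
    (F : Matrix (Fin N) (Fin N) ℝ → ℝ) (hF : UniformlyElliptic F) (hFhom : PosHom F)
    (c p : Euc N → ℝ) (h : Euc N → Euc N)
    (hc : ContinuousOn c (closure Ω)) (hh : ContinuousOn h (closure Ω))
    (hp : ContinuousOn p (closure Ω)) (hppos : ∀ x ∈ closure Ω, 0 < p x)
    (hl : 0 < lambda1 Ω α F h c)
    (ψ₁ : Euc N → ℝ) (hψpos : ∀ x ∈ Ω, 0 < ψ₁ x)
    (hψcont : ContinuousOn ψ₁ (closure Ω)) (hψ0 : ∀ x ∈ frontier Ω, ψ₁ x = 0)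
    (hψeig : IsViscSol Ω α F h
      (fun x y => -((c x + lambda1 Ω α F h c) * y ^ (1 + α))) ψ₁) :
    ∀ ε : ℝ, 0 < ε →
      ε < (2 : ℝ) ^ (-(γ / (1 + α + γ))) / sSup (ψ₁ '' closure Ω) *
        (sInf (p '' closure Ω) / lambda1 Ω α F h c) ^ (1 / (1 + α + γ)) →
      ∀ δ : ℝ, 0 ≤ δ →
        δ ≤ (2 : ℝ) ^ (-(γ / (1 + α + γ))) *
          (sInf (p '' closure Ω) / lambda1 Ω α F h c) ^ (1 / (1 + α + γ)) →
        IsViscSubSol Ω α F h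
          (fun x y => -(c x * y ^ (1 + α) + p x * (y + δ) ^ (-γ)))
          (fun x => ε * ψ₁ x) := by
  intro ε hε hεlt δ hδ0 hδle
  obtain ⟨hopen, hbdd, hconn, -⟩ := hΩ
  have hK : IsCompact (closure Ω) := hbdd.isCompact_closure
  set lam := lambda1 Ω α F h c with hlam_def
  set S := sSup (ψ₁ '' closure Ω) with hS_def
  set I := sInf (p '' closure Ω) with hI_def
  have hKne : (closure Ω).Nonempty := hconn.nonempty.closure
  have hIpos : 0 < I := by
    obtain ⟨x₀, hx₀, hx₀I⟩ := (hK.image_of_continuousOn hp).sInf_mem (hKne.image p)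
    rw [hI_def, ← hx₀I]; exact hppos x₀ hx₀
  have hSbdd : BddAbove (ψ₁ '' closure Ω) := (hK.image_of_continuousOn hψcont).bddAbove
  have hIbdd : BddBelow (p '' closure Ω) := (hK.image_of_continuousOn hp).bddBelow
  have h1α : (0:ℝ) < 1 + α := by linarith
  intro φ x hx hφ hmax
  have hxcl : x ∈ closure Ω := subset_closure hx
  have hψx : 0 < ψ₁ x := hψpos x hx
  have hψxS : ψ₁ x ≤ S := le_csSup hSbdd ⟨x, hxcl, rfl⟩
  have hSpos : 0 < S := lt_of_lt_of_le hψx hψxS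
  have hIle : I ≤ p x := csInf_le hIbdd ⟨x, hxcl, rfl⟩
  set u := ε * ψ₁ x with hu_def
  have hupos : 0 < u := mul_pos hε hψx
  have huδ₀ : u ≤ 2 ^ (-(γ / (1 + α + γ))) * (I / lam) ^ (1 / (1 + α + γ)) := by
    calc u ≤ ε * S := mul_le_mul_of_nonneg_left hψxS hε.le
    _ ≤ (2 ^ (-(γ / (1 + α + γ))) / S * (I / lam) ^ (1 / (1 + α + γ))) * S :=
        mul_le_mul_of_nonneg_right hεlt.le hSpos.le
    _ = 2 ^ (-(γ / (1 + α + γ))) * (I / lam) ^ (1 / (1 + α + γ)) := by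
        field_simp
  have hkey : lam * (u ^ (1 + α) * (u + δ) ^ γ) ≤ p x :=
    le_trans (key_ineq' lam I α γ u δ hl hIpos h1α hγ hupos huδ₀ hδ0 hδle) hIle
  have hT : (0:ℝ) < (u + δ) ^ γ := rpow_pos_of_pos (by linarith) γ
  have hkey2 : lam * u ^ (1 + α) ≤ p x * (u + δ) ^ (-γ) := by
    rw [Real.rpow_neg (by linarith : (0:ℝ) ≤ u + δ), ← div_eq_mul_inv]
    rw [le_div_iff₀ hT]
    calc lam * u ^ (1 + α) * (u + δ) ^ γ = lam * (u ^ (1 + α) * (u + δ) ^ γ) := by ring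
    _ ≤ p x := hkey
  have huα : 0 < u ^ (1 + α) := rpow_pos_of_pos hupos _
  -- scaled test function
  have hφdiff : DifferentiableAt ℝ φ x := hφ.differentiableAt (by norm_num)
  set ψ : Euc N → ℝ := fun y => ε⁻¹ * φ y with hψdef
  have hψC2 : ContDiffAt ℝ 2 ψ x := contDiffAt_const.mul hφ
  have hmax' : IsLocalMax (fun y => ψ₁ y - ψ y) x := by
    refine hmax.mono fun y hy => ?_
    simp only at hy ⊢
    have h2 := mul_le_mul_of_nonneg_left hy (inv_nonneg.mpr hε.le)
    have e1 : ∀ z : Euc N, ε⁻¹ * (ε * ψ₁ z - φ z) = ψ₁ z - ε⁻¹ * φ z := by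
      intro z; rw [mul_sub, ← mul_assoc, inv_mul_cancel₀ hε.ne', one_mul]
    rw [e1 y, e1 x] at h2
    exact h2
  have hεinv : (0:ℝ) < ε⁻¹ := inv_pos.mpr hε
  have hgrad : gradient ψ x = ε⁻¹ • gradient φ x := grad_const_mul' φ x hφdiff ε⁻¹
  have hhess : hessianMatrix ψ x = ε⁻¹ • hessianMatrix φ x := hessian_const_mul' φ x hφ ε⁻¹
  rcases hψeig.1 ψ x hx hψC2 hmax' with ⟨hne, hineq⟩ | ⟨⟨r, hr, hconst⟩, hle⟩
  · -- gradient nonzero case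
    left
    have hgradφ : gradient φ x ≠ 0 := by
      intro h0; apply hne; rw [hgrad, h0, smul_zero]
    refine ⟨hgradφ, ?_⟩
    simp only at hineq ⊢
    set v := gradient φ x with hv_def
    set K := ‖v‖ ^ α * (F (hessianMatrix φ x) + ⟪h x, v⟫) with hK_def
    have hrw : ‖gradient ψ x‖ ^ α * (F (hessianMatrix ψ x) + ⟪h x, gradient ψ x⟫)
        = (ε ^ α)⁻¹ * ε⁻¹ * K := by
      rw [hgrad, hhess, norm_smul, real_inner_smul_right, hFhom ε⁻¹ hεinv,
        Real.norm_eq_abs, abs_of_pos hεinv,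
        Real.mul_rpow hεinv.le (norm_nonneg v), Real.inv_rpow hε.le, hK_def]
      ring
    rw [hrw] at hineq
    have hεα : (0:ℝ) < ε ^ α := rpow_pos_of_pos hε α
    have hε1α : (0:ℝ) < ε ^ (1 + α) := rpow_pos_of_pos hε _
    have hone : ε ^ (1 + α) * ((ε ^ α)⁻¹ * ε⁻¹) = 1 := by
      rw [Real.rpow_add hε, rpow_one]; field_simp
    have hmul := mul_le_mul_of_nonneg_left hineq hε1α.le
    have hurw : u ^ (1 + α) = ε ^ (1 + α) * ψ₁ x ^ (1 + α) :=
      Real.mul_rpow hε.le hψx.le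
    have hfin : -((c x + lam) * u ^ (1 + α)) ≤ K := by
      calc -((c x + lam) * u ^ (1 + α))
          = ε ^ (1 + α) * -((c x + lam) * ψ₁ x ^ (1 + α)) := by rw [hurw]; ring
      _ ≤ ε ^ (1 + α) * ((ε ^ α)⁻¹ * ε⁻¹ * K) := hmul
      _ = (ε ^ (1 + α) * ((ε ^ α)⁻¹ * ε⁻¹)) * K := by ring
      _ = K := by rw [hone, one_mul]
    linarith [hkey2, hfin]
  · -- locally constant case
    right
    constructor
    · exact ⟨r, hr, fun y hy => by simp only; rw [hconst y hy]⟩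
    · simp only at hle ⊢
      have hψα : 0 < ψ₁ x ^ (1 + α) := rpow_pos_of_pos hψx _
      have hcl : 0 ≤ c x + lam := by nlinarith [hle, hψα]
      nlinarith [mul_nonneg hcl huα.le, hkey2]
end
end

section
/- Let α > −1 and γ ≥ 1. Let u : (0,1) → ℝ be twice differentiable with u > 0 on (0,1), satisfying |u'(x)|^α u''(x) + u(x)^{−γ} = 0 for all x ∈ (0,1), and assume u(x) → 0 as x → 0⁺. Then |u'(x)| → +∞ as x → 0⁺; in particular u is not Lipschitz continuous up to x = 0. -/
open Real Set Metric Filter Topology Bornology RealInnerProductSpace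

noncomputable section

private lemma exists_antideriv (γ : ℝ) (hγ : 1 ≤ γ) :
    ∃ G : ℝ → ℝ, (∀ t : ℝ, 0 < t → HasDerivAt G (t ^ (-γ)) t) ∧
      Tendsto G (𝓝[>] (0:ℝ)) atBot := by
  rcases eq_or_lt_of_le hγ with h1 | h1
  · refine ⟨Real.log, fun t ht => ?_, Real.tendsto_log_nhdsGT_zero⟩
    have := Real.hasDerivAt_log ht.ne'
    rwa [← h1, Real.rpow_neg_one t]
  · refine ⟨fun t => -(t ^ (1 - γ) / (γ - 1)), fun t ht => ?_, ?_⟩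
    · have h := (Real.hasDerivAt_rpow_const (p := 1 - γ) (Or.inl ht.ne')).div_const (γ - 1)
      have h2 := h.neg
      refine h2.congr_deriv ?_
      have : 1 - γ - 1 = -γ := by ring
      rw [this]
      have hne : γ - 1 ≠ 0 := by linarith
      field_simp
      ring
    · have h1' : (0:ℝ) < γ - 1 := by linarith
      have ht : Tendsto (fun t : ℝ => t ^ (1 - γ) / (γ - 1)) (𝓝[>] (0:ℝ)) atTop := by
        have : Tendsto (fun t : ℝ => t ^ (1 - γ)) (𝓝[>] (0:ℝ)) atTop := by
          have hcomp : Tendsto (fun t : ℝ => (t⁻¹) ^ (γ - 1)) (𝓝[>] (0:ℝ)) atTop :=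
            (tendsto_rpow_atTop h1').comp tendsto_inv_nhdsGT_zero
          refine hcomp.congr' ?_
          filter_upwards [self_mem_nhdsWithin] with t ht
          rw [← Real.rpow_neg_one t, ← Real.rpow_mul (le_of_lt ht),
            show (-1:ℝ) * (γ - 1) = 1 - γ by ring]
        exact this.atTop_div_const h1'
      exact tendsto_neg_atBot_iff.mpr ht

/-- for `γ ≥ 1`, a positive solution of `|u'|^α u'' + u^{−γ} = 0` on `(0,1)`
with `u → 0` at `0⁺` satisfies `|u'| → +∞` at `0⁺`; in particular `u` is not Lipschitz up to
`x = 0`. -/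
theorem statement13 (α γ : ℝ) (hα : -1 < α) (hγ : 1 ≤ γ)
    (u u' u'' : ℝ → ℝ)
    (hpos : ∀ x ∈ Ioo (0 : ℝ) 1, 0 < u x)
    (hd1 : ∀ x ∈ Ioo (0 : ℝ) 1, HasDerivAt u (u' x) x)
    (hd2 : ∀ x ∈ Ioo (0 : ℝ) 1, HasDerivAt u' (u'' x) x)
    (heq : ∀ x ∈ Ioo (0 : ℝ) 1, |u' x| ^ α * u'' x + u x ^ (-γ) = 0)
    (h0 : Tendsto u (𝓝[>] (0 : ℝ)) (𝓝 0)) :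
    Tendsto (fun x => |u' x|) (𝓝[>] (0 : ℝ)) atTop ∧
    ∀ K : NNReal, ¬ LipschitzOnWith K u (Ioo (0 : ℝ) 1) := by
  have hα2 : (1:ℝ) ≤ α + 2 := by linarith
  have hα2' : (0:ℝ) < α + 2 := by linarith
  -- u'' < 0 on (0,1)
  have hupp : ∀ x ∈ Ioo (0:ℝ) 1, u'' x < 0 := by
    intro x hx
    have h1 := heq x hx
    have h2 : (0:ℝ) < u x ^ (-γ) := Real.rpow_pos_of_pos (hpos x hx) _
    by_contra h
    push_neg at h
    have : 0 ≤ |u' x| ^ α * u'' x :=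
      mul_nonneg (Real.rpow_nonneg (abs_nonneg _) _) h
    linarith
  -- u' strictly antitone
  have hanti : StrictAntiOn u' (Ioo (0:ℝ) 1) := by
    apply strictAntiOn_of_deriv_neg (convex_Ioo 0 1)
    · intro x hx; exact (hd2 x hx).continuousAt.continuousWithinAt
    · intro x hx
      rw [interior_Ioo] at hx
      rw [(hd2 x hx).deriv]
      exact hupp x hx
  -- find ξ with u' ξ > 0
  have hhalf : (1/2 : ℝ) ∈ Ioo (0:ℝ) 1 := by norm_num
  have hu2 : 0 < u (1/2) := hpos _ hhalf
  obtain ⟨ε, hεm, hεlt⟩ : ∃ ε : ℝ, ε ∈ Ioo (0:ℝ) (1/2) ∧ u ε < u (1/2) := by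
    have h1 : ∀ᶠ x in 𝓝[>] (0:ℝ), u x < u (1/2) := h0.eventually_lt_const hu2
    have h2 : Ioo (0:ℝ) (1/2) ∈ 𝓝[>] (0:ℝ) :=
      Ioo_mem_nhdsGT_of_mem (by constructor <;> norm_num)
    obtain ⟨ε, h, h'⟩ := ((eventually_mem_set.mpr h2).and h1).exists
    exact ⟨ε, h, h'⟩
  have hsub : Icc ε (1/2 : ℝ) ⊆ Ioo (0:ℝ) 1 := fun y hy =>
    ⟨lt_of_lt_of_le hεm.1 hy.1, lt_of_le_of_lt hy.2 (by norm_num)⟩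
  obtain ⟨ξ, hξm, hξslope⟩ :=
    exists_hasDerivAt_eq_slope u u' hεm.2
      (fun y hy => (hd1 y (hsub hy)).continuousAt.continuousWithinAt)
      (fun y hy => hd1 y (hsub ⟨hy.1.le, hy.2.le⟩))
  have hξ1 : ξ ∈ Ioo (0:ℝ) 1 := hsub ⟨hξm.1.le, hξm.2.le⟩
  have hξpos : 0 < u' ξ := by
    rw [hξslope]
    exact div_pos (by linarith) (by linarith [hεm.2])
  -- u' > 0 on (0, ξ]
  have hu'pos : ∀ x ∈ Ioc (0:ℝ) ξ, 0 < u' x := by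
    intro x hx
    rcases eq_or_lt_of_le hx.2 with h | h
    · rwa [h]
    · exact lt_trans hξpos (hanti ⟨hx.1, lt_trans h hξ1.2⟩ hξ1 h)
  have hmem1 : ∀ x ∈ Ioc (0:ℝ) ξ, x ∈ Ioo (0:ℝ) 1 := fun x hx =>
    ⟨hx.1, lt_of_le_of_lt hx.2 hξ1.2⟩
  -- the antiderivative G and the energy E
  obtain ⟨G, hGd, hGbot⟩ := exists_antideriv γ hγ
  set E : ℝ → ℝ := fun x => (u' x) ^ (α + 2) / (α + 2) + G (u x) with hEdef
  have hE0 : ∀ x ∈ Ioc (0:ℝ) ξ, HasDerivAt E 0 x := by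
    intro x hx
    have hx1 := hmem1 x hx
    have hp := hu'pos x hx
    have h1 : HasDerivAt (fun y => (u' y) ^ (α + 2))
        ((α + 2) * (u' x) ^ (α + 2 - 1) * u'' x) x := by
      have := (Real.hasDerivAt_rpow_const (x := u' x) (p := α + 2)
        (Or.inr hα2)).comp x (hd2 x hx1)
      exact this
    have h2 : HasDerivAt (fun y => G (u y)) (u x ^ (-γ) * u' x) x :=
      (hGd (u x) (hpos x hx1)).comp x (hd1 x hx1)
    have h3 := (h1.div_const (α + 2)).add h2
    refine h3.congr_deriv ?_
    have key : |u' x| ^ α * u'' x + u x ^ (-γ) = 0 := heq x hx1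
    rw [abs_of_pos hp] at key
    have e1 : (α + 2) * u' x ^ (α + 2 - 1) * u'' x / (α + 2)
        = u' x ^ (α + 1) * u'' x := by
      rw [show α + 2 - 1 = α + 1 by ring]
      field_simp
    rw [e1, show α + 1 = α + 1 from rfl, Real.rpow_add hp, Real.rpow_one]
    linear_combination (u' x) * key
  -- E is constant on (0, ξ]
  have hEconst : ∀ x ∈ Ioo (0:ℝ) ξ, E ξ = E x := by
    intro x hx
    have hIcc : Icc x ξ ⊆ Ioc (0:ℝ) ξ := fun y hy => ⟨lt_of_lt_of_le hx.1 hy.1, hy.2⟩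
    have := constant_of_has_deriv_right_zero
      (f := E) (a := x) (b := ξ)
      (fun y hy => (hE0 y (hIcc hy)).continuousAt.continuousWithinAt)
      (fun y hy => ((hE0 y (hIcc ⟨hy.1, hy.2.le⟩)).hasDerivWithinAt))
    exact this ξ ⟨hx.2.le, le_rfl⟩
  -- G(u x) → -∞ along 0⁺
  have huu : Tendsto u (𝓝[>] (0:ℝ)) (𝓝[>] (0:ℝ)) := by
    rw [tendsto_nhdsWithin_iff]
    refine ⟨h0, ?_⟩
    filter_upwards [Ioo_mem_nhdsGT_of_mem (by constructor <;> norm_num :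
      (0:ℝ) ∈ Ico (0:ℝ) 1)] with x hx
    exact hpos x hx
  have hGu : Tendsto (fun x => G (u x)) (𝓝[>] (0:ℝ)) atBot := hGbot.comp huu
  have hIooξ : Ioo (0:ℝ) ξ ∈ 𝓝[>] (0:ℝ) :=
    Ioo_mem_nhdsGT_of_mem ⟨le_refl 0, hξ1.1⟩
  -- (u')^(α+2) → ∞
  have h2 : Tendsto (fun x => (u' x) ^ (α + 2)) (𝓝[>] (0:ℝ)) atTop := by
    have h1 : Tendsto (fun x => (α + 2) * (E ξ - G (u x))) (𝓝[>] (0:ℝ)) atTop := by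
      have := tendsto_neg_atTop_iff.mpr hGu
      have h' : Tendsto (fun x => E ξ - G (u x)) (𝓝[>] (0:ℝ)) atTop := by
        simpa [sub_eq_add_neg] using tendsto_atTop_add_const_left _ (E ξ) this
      exact h'.const_mul_atTop hα2'
    refine h1.congr' ?_
    filter_upwards [hIooξ] with x hx
    have hc := hEconst x hx
    rw [hc]
    simp only [hEdef]
    field_simp
    ring
  have h3 : Tendsto u' (𝓝[>] (0:ℝ)) atTop := by
    have := (tendsto_rpow_atTop (inv_pos.mpr hα2')).comp h2
    refine this.congr' ?_
    filter_upwards [hIooξ] with x hx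
    have hp := hu'pos x ⟨hx.1, hx.2.le⟩
    simp only [Function.comp]
    rw [← Real.rpow_mul hp.le, mul_inv_cancel₀ hα2'.ne', Real.rpow_one]
  have habs : Tendsto (fun x => |u' x|) (𝓝[>] (0:ℝ)) atTop := by
    refine h3.congr' ?_
    filter_upwards [hIooξ] with x hx
    exact (abs_of_pos (hu'pos x ⟨hx.1, hx.2.le⟩)).symm
  refine ⟨habs, ?_⟩
  -- not Lipschitz
  intro K hK
  obtain ⟨x, hxK, hxm⟩ :
      ∃ x : ℝ, (K:ℝ) < u' x ∧ x ∈ Ioo (0:ℝ) 1 := by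
    have h1 : ∀ᶠ x in 𝓝[>] (0:ℝ), (K:ℝ) < u' x := h3.eventually_gt_atTop _
    have h2 : Ioo (0:ℝ) 1 ∈ 𝓝[>] (0:ℝ) :=
      Ioo_mem_nhdsGT_of_mem ⟨le_refl 0, by norm_num⟩
    obtain ⟨x, h, h'⟩ := (h1.and (eventually_mem_set.mpr h2)).exists
    exact ⟨x, h, h'⟩
  have hslope : Tendsto (slope u x) (𝓝[≠] x) (𝓝 (u' x)) :=
    hasDerivAt_iff_tendsto_slope.mp (hd1 x hxm)
  have h4 : ∀ᶠ y in 𝓝[≠] x, (K:ℝ) < slope u x y :=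
    hslope.eventually_const_lt hxK
  have h5 : Ioo (0:ℝ) 1 ∈ 𝓝[≠] x :=
    nhdsWithin_le_nhds (isOpen_Ioo.mem_nhds hxm)
  obtain ⟨y, ⟨hy1, hy2⟩, hy3⟩ :=
    ((h4.and (eventually_mem_set.mpr h5)).and
      (eventually_mem_set.mpr (self_mem_nhdsWithin : {x}ᶜ ∈ 𝓝[≠] x))).exists
  have hyx : y ≠ x := hy3
  have h6 : |u y - u x| ≤ (K:ℝ) * |y - x| := by
    have := hK.dist_le_mul y hy2 x hxm
    rwa [Real.dist_eq, Real.dist_eq] at this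
  have hxy : (0:ℝ) < |y - x| := abs_pos.mpr (sub_ne_zero.mpr hyx)
  have h7 : slope u x y ≤ (K:ℝ) := by
    rw [slope_def_field]
    calc (u y - u x) / (y - x) ≤ |(u y - u x) / (y - x)| := le_abs_self _
      _ = |u y - u x| / |y - x| := abs_div _ _
      _ ≤ (K:ℝ) := by rw [div_le_iff₀ hxy]; exact h6
  linarith
end
end

section
/- Let N ≥ 2, α > −1, 0 < γ < 1. Let ũ : [0,1) → ℝ be continuous with ũ > 0 on [0,1), twice differentiable on (0,1), ũ'(r) < 0 on (0,1), satisfying |ũ'(r)|^α (ũ''(r) + (N−1)ũ'(r)/r) + ũ(r)^{−γ} = 0 on (0,1) and ũ(r) → 0 as r → 1⁻. Then |ũ'(r)|^{2+α} has a finite limit as r → 1⁻; more precisely, for all r ∈ [1/2,1), |ũ'(r)|^{2+α}/(2+α) · r^{(N−1)(2+α)} + ũ(r)^{1−γ}/(1−γ) · r^{(N−1)(2+α)} = C + (1/(1−γ)) ∫_{1/2}^r (N−1)(2+α) s^{(N−1)(2+α)−1} ũ(s)^{1−γ} ds, where C is the value of the left-hand side at r = 1/2. In particular ũ extends to a C¹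 function on [0,1]. -/
open Real Set Metric Filter Topology Bornology RealInnerProductSpace

noncomputable section

set_option maxHeartbeats 1000000

open MeasureTheory


private lemma energy_deriv {α γ Nr : ℝ} {u u' u'' : ℝ → ℝ} {r : ℝ} (hr : 0 < r)
    (hu : HasDerivAt u (u' r) r) (hu' : HasDerivAt u' (u'' r) r) (hneg : u' r < 0)
    (hupos : 0 < u r) (h2α : 0 < 2 + α) (h1γ : (0:ℝ) < 1 - γ)
    (heq : (-u' r) ^ α * (u'' r + (Nr - 1) * u' r / r) + u r ^ (-γ) = 0) :
    HasDerivAt (fun t => (-u' t) ^ (2 + α) / (2 + α) * t ^ ((Nr - 1) * (2 + α)) +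
        u t ^ (1 - γ) / (1 - γ) * t ^ ((Nr - 1) * (2 + α)))
      ((Nr - 1) * (2 + α) * r ^ ((Nr - 1) * (2 + α) - 1) * u r ^ (1 - γ) / (1 - γ)) r := by
  set m : ℝ := (Nr - 1) * (2 + α) with hm
  have ha : 0 < -u' r := by linarith
  have hrne : r ≠ 0 := ne_of_gt hr
  have h1 : HasDerivAt (fun t => (-u' t) ^ (2 + α))
      (-u'' r * (2 + α) * (-u' r) ^ (2 + α - 1)) r := (hu'.neg).rpow_const (Or.inl (ne_of_gt ha))
  have h2 : HasDerivAt (fun t => u t ^ (1 - γ))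
      (u' r * (1 - γ) * u r ^ (1 - γ - 1)) r := hu.rpow_const (Or.inl (ne_of_gt hupos))
  have h3 : HasDerivAt (fun t : ℝ => t ^ m) (m * r ^ (m - 1)) r :=
    Real.hasDerivAt_rpow_const (Or.inl hrne)
  have H := ((h1.div_const (2 + α)).mul h3).add ((h2.div_const (1 - γ)).mul h3)
  convert H using 1
  · rfl
  · rfl
  · rfl
  have e1 : (-u' r) ^ (2 + α - 1) = (-u' r) ^ α * (-u' r) := by
    rw [show (2 + α - 1) = α + 1 by ring, Real.rpow_add_one (ne_of_gt ha)]
  have e2 : (-u' r) ^ (2 + α) = (-u' r) ^ α * (-u' r) * (-u' r) := by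
    rw [show (2 + α) = α + 1 + 1 by ring, Real.rpow_add_one (ne_of_gt ha),
      Real.rpow_add_one (ne_of_gt ha)]
  have e3 : u r ^ (1 - γ - 1) = u r ^ (-γ) := by norm_num
  have e4 : r ^ m = r ^ (m - 1) * r := by
    rw [← Real.rpow_add_one hrne]; norm_num
  have key : (-u' r) ^ α * u'' r * r = -(u r ^ (-γ)) * r + (Nr - 1) * (-u' r) ^ α * (-u' r) := by
    have h := heq
    field_simp at h
    linarith [h]
  rw [e1, e2, e3, e4]
  generalize hS : r ^ (m - 1) = S at *
  generalize hA : (-u' r) ^ α = A at *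
  generalize hU : u r ^ (-γ) = U at *
  generalize hB : u r ^ (1 - γ) = B at *
  field_simp
  linear_combination (-(1-γ)*(2+α)*u' r*S)*key + (-(1-γ)^2*A*(u' r)^2*S)*hm

private lemma gee_deriv {α γ Nr : ℝ} {u u' u'' : ℝ → ℝ} {r : ℝ} (hr : 0 < r)
    (hu : HasDerivAt u (u' r) r) (hu' : HasDerivAt u' (u'' r) r) (hneg : u' r < 0)
    (heq : (-u' r) ^ α * (u'' r + (Nr - 1) * u' r / r) + u r ^ (-γ) = 0) :
    HasDerivAt (fun t => t ^ ((1 + α) * (Nr - 1)) * (-u' t) ^ (1 + α))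
      ((1 + α) * r ^ ((1 + α) * (Nr - 1)) * u r ^ (-γ)) r := by
  set q : ℝ := (1 + α) * (Nr - 1) with hq
  have ha : 0 < -u' r := by linarith
  have hrne : r ≠ 0 := ne_of_gt hr
  have h1 : HasDerivAt (fun t => (-u' t) ^ (1 + α))
      (-u'' r * (1 + α) * (-u' r) ^ (1 + α - 1)) r := (hu'.neg).rpow_const (Or.inl (ne_of_gt ha))
  have h3 : HasDerivAt (fun t : ℝ => t ^ q) (q * r ^ (q - 1)) r :=
    Real.hasDerivAt_rpow_const (Or.inl hrne)
  have H := h3.mul h1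
  convert H using 1
  · rfl
  · rfl
  · rfl
  have e1 : (-u' r) ^ (1 + α - 1) = (-u' r) ^ α := by norm_num
  have e2 : (-u' r) ^ (1 + α) = (-u' r) ^ α * (-u' r) := by
    rw [show (1 + α) = α + 1 by ring, Real.rpow_add_one (ne_of_gt ha)]
  have e4 : r ^ q = r ^ (q - 1) * r := by
    rw [← Real.rpow_add_one hrne]; norm_num
  have key : (-u' r) ^ α * u'' r * r = -(u r ^ (-γ)) * r + (Nr - 1) * (-u' r) ^ α * (-u' r) := by
    have h := heq
    field_simp at h
    linarith [h]
  rw [e1, e2, e4]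
  generalize hS : r ^ (q - 1) = S at *
  generalize hA : (-u' r) ^ α = A at *
  generalize hU : u r ^ (-γ) = U at *
  linear_combination ((1 + α) * S) * key + (S * A * u' r) * hq

/-- for `0 < γ < 1`, a positive decreasing radial solution `ũ` of
`|ũ'|^α(ũ'' + (N−1)ũ'/r) + ũ^{−γ} = 0` on `(0,1)` with `ũ → 0` at `1⁻` satisfies: `|ũ'|^{2+α}`
has a finite limit at `1⁻`, the explicit energy identity holds on `[1/2,1)`, and `ũ` extends to
a `C¹` function on `[0,1]`. -/
theorem statement16 (N : ℕ) (hN : 2 ≤ N) (α γ : ℝ) (hα : -1 < α)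
    (hγ0 : 0 < γ) (hγ1 : γ < 1)
    (u u' u'' : ℝ → ℝ)
    (hcont : ContinuousOn u (Ico (0 : ℝ) 1)) (hpos : ∀ r ∈ Ico (0 : ℝ) 1, 0 < u r)
    (hd1 : ∀ r ∈ Ioo (0 : ℝ) 1, HasDerivAt u (u' r) r)
    (hd2 : ∀ r ∈ Ioo (0 : ℝ) 1, HasDerivAt u' (u'' r) r)
    (hneg : ∀ r ∈ Ioo (0 : ℝ) 1, u' r < 0)
    (heq : ∀ r ∈ Ioo (0 : ℝ) 1,
      |u' r| ^ α * (u'' r + ((N : ℝ) - 1) * u' r / r) + u r ^ (-γ) = 0)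
    (h1 : Tendsto u (𝓝[<] (1 : ℝ)) (𝓝 0)) :
    (∃ L : ℝ, Tendsto (fun r => |u' r| ^ (2 + α)) (𝓝[<] (1 : ℝ)) (𝓝 L)) ∧
    (∀ r ∈ Ico (1 / 2 : ℝ) 1,
      |u' r| ^ (2 + α) / (2 + α) * r ^ (((N : ℝ) - 1) * (2 + α)) +
        u r ^ (1 - γ) / (1 - γ) * r ^ (((N : ℝ) - 1) * (2 + α)) =
      (|u' (1 / 2)| ^ (2 + α) / (2 + α) * (1 / 2 : ℝ) ^ (((N : ℝ) - 1) * (2 + α)) +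
        u (1 / 2) ^ (1 - γ) / (1 - γ) * (1 / 2 : ℝ) ^ (((N : ℝ) - 1) * (2 + α))) +
      (1 / (1 - γ)) * ∫ s in (1 / 2 : ℝ)..r,
        ((N : ℝ) - 1) * (2 + α) * s ^ (((N : ℝ) - 1) * (2 + α) - 1) * u s ^ (1 - γ)) ∧
    ∃ v : ℝ → ℝ, ContDiffOn ℝ 1 v (Icc (0 : ℝ) 1) ∧ ∀ r ∈ Ico (0 : ℝ) 1, v r = u r := by
  have hNR : (2:ℝ) ≤ (N:ℝ) := by exact_mod_cast hN
  have h2α : (0:ℝ) < 2 + α := by linarith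
  have hβ : (0:ℝ) < 1 + α := by linarith
  have h1γ : (0:ℝ) < 1 - γ := by linarith
  set m : ℝ := ((N:ℝ) - 1) * (2 + α) with hm
  have hmpos : 0 < m := mul_pos (by linarith) h2α
  have hm1 : (1:ℝ) ≤ m := by nlinarith
  have hsub : ∀ r ∈ Ioo (0:ℝ) 1, r ∈ Ico (0:ℝ) 1 := fun r hr => ⟨hr.1.le, hr.2⟩
  have habs : ∀ r ∈ Ioo (0:ℝ) 1, |u' r| = -u' r := fun r hr => abs_of_neg (hneg r hr)
  have heq' : ∀ r ∈ Ioo (0:ℝ) 1,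
      (-u' r) ^ α * (u'' r + ((N:ℝ) - 1) * u' r / r) + u r ^ (-γ) = 0 := by
    intro r hr
    have h := heq r hr
    rwa [habs r hr] at h
  have hanti : AntitoneOn u (Ico (0:ℝ) 1) := by
    apply StrictAntiOn.antitoneOn
    apply strictAntiOn_of_deriv_neg (convex_Ico 0 1) hcont
    intro x hx
    rw [interior_Ico] at hx
    rw [(hd1 x hx).deriv]
    exact hneg x hx
  set E : ℝ → ℝ := fun r => (-u' r) ^ (2+α) / (2+α) * r ^ m + u r ^ (1-γ) / (1-γ) * r ^ m
    with hE
  have hE' : ∀ r ∈ Ioo (0:ℝ) 1, HasDerivAt E (m * r ^ (m-1) * u r ^ (1-γ) / (1-γ)) r := by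
    intro r hr
    exact energy_deriv (Nr := (N:ℝ)) hr.1 (hd1 r hr) (hd2 r hr) (hneg r hr)
      (hpos r (hsub r hr)) h2α h1γ (heq' r hr)
  have hint : ∀ a b : ℝ, 0 < a → a ≤ b → b < 1 →
      IntervalIntegrable (fun s => m * s ^ (m-1) * u s ^ (1-γ) / (1-γ)) volume a b := by
    intro a b ha hab hb
    apply ContinuousOn.intervalIntegrable
    rw [uIcc_of_le hab]
    have hIc : Icc a b ⊆ Ico (0:ℝ) 1 := fun x hx => ⟨le_trans ha.le hx.1, lt_of_le_of_lt hx.2 hb⟩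
    refine ContinuousOn.div_const (ContinuousOn.mul (continuousOn_const.mul ?_) ?_) _
    · exact ContinuousOn.rpow_const continuousOn_id
        (fun x hx => Or.inl (ne_of_gt (lt_of_lt_of_le ha hx.1)))
    · exact (hcont.mono hIc).rpow_const (fun x hx => Or.inr h1γ.le)
  have hftc : ∀ a b : ℝ, 0 < a → a ≤ b → b < 1 →
      E b - E a = ∫ s in a..b, m * s ^ (m-1) * u s ^ (1-γ) / (1-γ) := by
    intro a b ha hab hb
    rw [intervalIntegral.integral_eq_sub_of_hasDerivAt ?_ (hint a b ha hab hb)]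
    intro x hx
    rw [uIcc_of_le hab] at hx
    exact hE' x ⟨lt_of_lt_of_le ha hx.1, lt_of_le_of_lt hx.2 hb⟩
  have hptnonneg : ∀ s : ℝ, 0 < s → s < 1 → 0 ≤ m * s ^ (m-1) * u s ^ (1-γ) / (1-γ) := by
    intro s hs0 hs1
    have h1 : (0:ℝ) ≤ s ^ (m-1) := Real.rpow_nonneg hs0.le _
    have h2 : (0:ℝ) ≤ u s ^ (1-γ) := Real.rpow_nonneg (hpos s ⟨hs0.le, hs1⟩).le _
    positivity
  have hmono : MonotoneOn E (Ioo (1/2 : ℝ) 1) := by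
    intro x hx y hy hxy
    have hfc := hftc x y (by linarith [hx.1]) hxy hy.2
    have hnn : 0 ≤ ∫ s in x..y, m * s ^ (m-1) * u s ^ (1-γ) / (1-γ) := by
      apply intervalIntegral.integral_nonneg hxy
      intro s hs
      exact hptnonneg s (by linarith [hs.1, hx.1]) (by linarith [hs.2, hy.2])
    have h2 : 0 ≤ E y - E x := by rw [hfc]; exact hnn
    linarith
  have hbdd : BddAbove (E '' Ioo (1/2:ℝ) 1) := by
    refine ⟨E (1/2) + m * u (1/2) ^ (1-γ) / (1-γ), ?_⟩
    rintro _ ⟨r, hr, rfl⟩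
    have hfc := hftc (1/2) r (by norm_num) hr.1.le hr.2
    have hb : ∫ s in (1/2:ℝ)..r, m * s ^ (m-1) * u s ^ (1-γ) / (1-γ)
        ≤ ∫ s in (1/2:ℝ)..r, m * u (1/2) ^ (1-γ) / (1-γ) := by
      apply intervalIntegral.integral_mono_on hr.1.le (hint _ _ (by norm_num) hr.1.le hr.2)
        intervalIntegrable_const
      intro s hs
      have hs0 : (0:ℝ) < s := by linarith [hs.1]
      have hs1 : s < 1 := lt_of_le_of_lt hs.2 hr.2
      have e1 : s ^ (m-1) ≤ 1 := Real.rpow_le_one hs0.le hs1.le (by linarith)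
      have e2 : u s ^ (1-γ) ≤ u (1/2) ^ (1-γ) := by
        apply Real.rpow_le_rpow (hpos s ⟨hs0.le, hs1⟩).le ?_ h1γ.le
        exact hanti (by constructor <;> norm_num) ⟨hs0.le, hs1⟩ hs.1
      have e3 : (0:ℝ) ≤ u s ^ (1-γ) := Real.rpow_nonneg (hpos s ⟨hs0.le, hs1⟩).le _
      calc m * s ^ (m-1) * u s ^ (1-γ) / (1-γ)
          ≤ m * 1 * (u (1/2) ^ (1-γ)) / (1-γ) := by
            refine div_le_div_of_nonneg_right ?_ h1γ.le
            have e0 : (0:ℝ) ≤ s ^ (m-1) := Real.rpow_nonneg hs0.le _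
            exact mul_le_mul (mul_le_mul le_rfl e1 e0 hmpos.le) e2 e3 (by positivity)
          _ = m * u (1/2) ^ (1-γ) / (1-γ) := by ring
    have hc : ∫ s in (1/2:ℝ)..r, m * u (1/2) ^ (1-γ) / (1-γ)
        = (r - 1/2) * (m * u (1/2) ^ (1-γ) / (1-γ)) := by
      rw [intervalIntegral.integral_const, smul_eq_mul]
    have hnn : (0:ℝ) ≤ m * u (1/2) ^ (1-γ) / (1-γ) := by
      have := Real.rpow_nonneg (hpos (1/2) (by constructor <;> norm_num)).le (1-γ)
      positivity
    nlinarith [hr.1, hr.2]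
  have hEtend : Tendsto E (𝓝[<] (1:ℝ)) (𝓝 (sSup (E '' Ioo (1/2:ℝ) 1))) :=
    MonotoneOn.tendsto_nhdsWithin_Ioo_left ⟨3/4, by norm_num, by norm_num⟩ hmono hbdd
  set LE : ℝ := sSup (E '' Ioo (1/2:ℝ) 1) with hLE
  have hrm : Tendsto (fun r : ℝ => r ^ m) (𝓝[<] (1:ℝ)) (𝓝 1) := by
    have hid : Tendsto (fun r : ℝ => r) (𝓝[<] (1:ℝ)) (𝓝 1) :=
      tendsto_id.mono_left nhdsWithin_le_nhds
    have := hid.rpow_const (p := m) (Or.inl one_ne_zero)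
    simpa using this
  have hu1γ : Tendsto (fun r => u r ^ (1-γ)) (𝓝[<] (1:ℝ)) (𝓝 0) := by
    have := h1.rpow_const (p := 1-γ) (Or.inr h1γ.le)
    simpa [Real.zero_rpow (ne_of_gt h1γ)] using this
  have hLtend : Tendsto (fun r => |u' r| ^ (2 + α)) (𝓝[<] (1:ℝ))
      (𝓝 ((2+α) * (LE / 1 - 0 / (1-γ)))) := by
    have ht : Tendsto (fun r => (2+α) * (E r / r ^ m - u r ^ (1-γ) / (1-γ))) (𝓝[<] (1:ℝ))
        (𝓝 ((2+α) * (LE / 1 - 0 / (1-γ)))) :=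
      (((hEtend.div hrm one_ne_zero).sub (hu1γ.div_const (1-γ))).const_mul (2+α))
    apply ht.congr'
    filter_upwards [Ioo_mem_nhdsLT (by norm_num : (0:ℝ) < 1)] with r hr
    rw [habs r hr]
    have hrm0 : (0:ℝ) < r ^ m := Real.rpow_pos_of_pos hr.1 m
    simp only [hE]
    field_simp
    ring
  have concl2 : ∀ r ∈ Ico (1 / 2 : ℝ) 1,
      |u' r| ^ (2 + α) / (2 + α) * r ^ m + u r ^ (1 - γ) / (1 - γ) * r ^ m =
      (|u' (1 / 2)| ^ (2 + α) / (2 + α) * (1 / 2 : ℝ) ^ m +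
        u (1 / 2) ^ (1 - γ) / (1 - γ) * (1 / 2 : ℝ) ^ m) +
      (1 / (1 - γ)) * ∫ s in (1 / 2 : ℝ)..r, m * s ^ (m - 1) * u s ^ (1 - γ) := by
    intro r hr
    have hr' : r ∈ Ioo (0:ℝ) 1 := ⟨by linarith [hr.1], hr.2⟩
    have h12 : (1/2:ℝ) ∈ Ioo (0:ℝ) 1 := by constructor <;> norm_num
    have hfc := hftc (1/2) r (by norm_num) hr.1 hr.2
    have hdiv : ∫ s in (1/2:ℝ)..r, m * s ^ (m-1) * u s ^ (1-γ) / (1-γ)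
        = (∫ s in (1/2:ℝ)..r, m * s ^ (m-1) * u s ^ (1-γ)) / (1-γ) :=
      intervalIntegral.integral_div _ _
    rw [habs r hr', habs (1/2) h12]
    have hgoal : E r = E (1/2)
        + (1/(1-γ)) * ∫ s in (1/2:ℝ)..r, m * s ^ (m-1) * u s ^ (1-γ) := by
      rw [hdiv] at hfc
      field_simp at hfc ⊢
      linarith
    simpa [hE] using hgoal
  refine ⟨⟨_, hLtend⟩, concl2, ?_⟩
  -- limit of u' at 1⁻
  set L : ℝ := (2+α) * (LE / 1 - 0 / (1-γ)) with hLdef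
  have hL0 : 0 ≤ L :=
    ge_of_tendsto hLtend (Eventually.of_forall fun r => Real.rpow_nonneg (abs_nonneg _) _)
  set D1 : ℝ := -(L ^ (2+α)⁻¹) with hD1
  have hu'1 : Tendsto u' (𝓝[<] (1:ℝ)) (𝓝 D1) := by
    have h2 := hLtend.rpow_const (p := (2+α)⁻¹) (Or.inr (by positivity))
    apply (h2.neg).congr'
    filter_upwards [Ioo_mem_nhdsLT (by norm_num : (0:ℝ) < 1)] with r hr
    rw [Real.rpow_rpow_inv (abs_nonneg _) (ne_of_gt h2α), habs r hr, neg_neg]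
  -- the function G
  set q : ℝ := (1+α) * ((N:ℝ)-1) with hq
  have hqpos : 0 < q := mul_pos hβ (by linarith)
  set G : ℝ → ℝ := fun r => r ^ q * (-u' r) ^ (1+α) with hG
  have hG' : ∀ r ∈ Ioo (0:ℝ) 1, HasDerivAt G ((1+α) * r ^ q * u r ^ (-γ)) r := fun r hr =>
    gee_deriv (Nr := (N:ℝ)) hr.1 (hd1 r hr) (hd2 r hr) (hneg r hr) (heq' r hr)
  have hGint : ∀ a b : ℝ, 0 < a → a ≤ b → b < 1 →
      IntervalIntegrable (fun s => (1+α) * s ^ q * u s ^ (-γ)) volume a b := by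
    intro a b ha hab hb
    apply ContinuousOn.intervalIntegrable
    rw [uIcc_of_le hab]
    have hIc : Icc a b ⊆ Ico (0:ℝ) 1 := fun x hx => ⟨le_trans ha.le hx.1, lt_of_le_of_lt hx.2 hb⟩
    refine ContinuousOn.mul (continuousOn_const.mul ?_) ?_
    · exact ContinuousOn.rpow_const continuousOn_id
        (fun x hx => Or.inl (ne_of_gt (lt_of_lt_of_le ha hx.1)))
    · exact (hcont.mono hIc).rpow_const (fun x hx => Or.inl (ne_of_gt (hpos x (hIc hx))))
  have hGftc : ∀ a b : ℝ, 0 < a → a ≤ b → b < 1 →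
      G b - G a = ∫ s in a..b, (1+α) * s ^ q * u s ^ (-γ) := by
    intro a b ha hab hb
    rw [intervalIntegral.integral_eq_sub_of_hasDerivAt ?_ (hGint a b ha hab hb)]
    intro x hx
    rw [uIcc_of_le hab] at hx
    exact hG' x ⟨lt_of_lt_of_le ha hx.1, lt_of_le_of_lt hx.2 hb⟩
  set Mu : ℝ := u (1/2) ^ (-γ) with hMu
  have hMupos : 0 < Mu := Real.rpow_pos_of_pos (hpos (1/2) (by constructor <;> norm_num)) _
  have hUb : ∀ s : ℝ, 0 < s → s ≤ 1/2 → u s ^ (-γ) ≤ Mu := by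
    intro s hs0 hs2
    rw [hMu]
    apply Real.rpow_le_rpow_of_nonpos (hpos (1/2) (by constructor <;> norm_num)) ?_
      (by linarith : -γ ≤ 0)
    exact hanti ⟨hs0.le, by linarith⟩ (by constructor <;> norm_num) hs2
  have hGpos : ∀ t ∈ Ioo (0:ℝ) (1/2:ℝ), 0 ≤ G t := by
    intro t ht
    have ha : 0 ≤ -u' t := by linarith [hneg t ⟨ht.1, by linarith [ht.2]⟩]
    exact mul_nonneg (Real.rpow_nonneg ht.1.le _) (Real.rpow_nonneg ha _)
  have hbdd0 : BddBelow (G '' Ioo (0:ℝ) (1/2:ℝ)) := ⟨0, by rintro _ ⟨t, ht, rfl⟩; exact hGpos t ht⟩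
  set C0 : ℝ := sInf (G '' Ioo (0:ℝ) (1/2:ℝ)) with hC0
  have hC0np : ¬ (0 < C0) := by
    intro hC
    set c : ℝ := C0 ^ (1+α)⁻¹ with hc
    have hcpos : 0 < c := Real.rpow_pos_of_pos hC _
    have hlow : ∀ t ∈ Ioo (0:ℝ) (1/2:ℝ), c / t ≤ -u' t := by
      intro t ht
      have ht1 : t < 1 := by linarith [ht.2]
      have h0 : C0 ≤ G t := csInf_le hbdd0 (mem_image_of_mem _ ht)
      have htq : 0 < t ^ q := Real.rpow_pos_of_pos ht.1 q
      have ha : 0 < -u' t := by linarith [hneg t ⟨ht.1, ht1⟩]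
      have h2 : C0 / t ^ q ≤ (-u' t) ^ (1+α) := by
        rw [div_le_iff₀ htq]
        calc C0 ≤ G t := h0
        _ = (-u' t) ^ (1+α) * t ^ q := by simp only [hG]; ring
      have h3 : (C0 / t ^ q) ^ (1+α)⁻¹ ≤ ((-u' t) ^ (1+α)) ^ (1+α)⁻¹ :=
        Real.rpow_le_rpow (by positivity) h2 (by positivity)
      rw [Real.rpow_rpow_inv ha.le (ne_of_gt hβ)] at h3
      have h4 : (C0 / t ^ q) ^ (1+α)⁻¹ = c / t ^ ((N:ℝ)-1) := by
        rw [Real.div_rpow hC.le (Real.rpow_nonneg ht.1.le q), ← Real.rpow_mul ht.1.le,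
          show q * (1+α)⁻¹ = (N:ℝ)-1 by rw [hq]; field_simp]
      have h5 : t ^ ((N:ℝ)-1) ≤ t := by
        have := Real.rpow_le_rpow_of_exponent_ge ht.1 (by linarith [ht.2] : t ≤ 1)
          (by linarith : (1:ℝ) ≤ (N:ℝ)-1)
        rwa [Real.rpow_one] at this
      have h6 : c / t ≤ c / t ^ ((N:ℝ)-1) :=
        div_le_div_of_nonneg_left hcpos.le (Real.rpow_pos_of_pos ht.1 _) h5
      calc c / t ≤ c / t ^ ((N:ℝ)-1) := h6
      _ = (C0 / t ^ q) ^ (1+α)⁻¹ := h4.symm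
      _ ≤ -u' t := h3
    set X : ℝ := (u (1/4) + c * Real.log (1/4) - u 0 - 1) / c with hX
    set s : ℝ := min (Real.exp X) (1/8) with hs
    have hs0 : 0 < s := lt_min (Real.exp_pos X) (by norm_num)
    have hs8 : s ≤ 1/8 := min_le_right _ _
    have hs14 : s ≤ 1/4 := by linarith
    have hsIoo : ∀ t ∈ Icc s (1/4:ℝ), t ∈ Ioo (0:ℝ) (1/2:ℝ) :=
      fun t htt => ⟨lt_of_lt_of_le hs0 htt.1, by linarith [htt.2]⟩
    have hscont : ContinuousOn u' (Icc s (1/4:ℝ)) := by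
      intro x hx
      have hx' : x ∈ Ioo (0:ℝ) 1 := ⟨(hsIoo x hx).1, by linarith [(hsIoo x hx).2]⟩
      exact ((hd2 x hx').continuousAt).continuousWithinAt
    have hftc2 : ∫ t in s..(1/4:ℝ), u' t = u (1/4) - u s := by
      apply intervalIntegral.integral_eq_sub_of_hasDerivAt
      · intro x hx
        rw [uIcc_of_le hs14] at hx
        exact hd1 x ⟨(hsIoo x hx).1, by linarith [(hsIoo x hx).2]⟩
      · apply ContinuousOn.intervalIntegrable
        rw [uIcc_of_le hs14]; exact hscont
    have hcint : IntervalIntegrable (fun t => c / t) volume s (1/4) := by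
      apply ContinuousOn.intervalIntegrable
      rw [uIcc_of_le hs14]
      exact continuousOn_const.div continuousOn_id
        (fun x hx => ne_of_gt (lt_of_lt_of_le hs0 hx.1))
    have hmono2 : ∫ t in s..(1/4:ℝ), c / t ≤ ∫ t in s..(1/4:ℝ), -u' t := by
      apply intervalIntegral.integral_mono_on hs14 hcint
      · apply ContinuousOn.intervalIntegrable
        rw [uIcc_of_le hs14]; exact hscont.neg
      · intro x hx; exact hlow x (hsIoo x hx)
    have hloga : ∫ t in s..(1/4:ℝ), c / t = c * (Real.log (1/4) - Real.log s) := by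
      have h0m : (0:ℝ) ∉ uIcc s (1/4:ℝ) := by
        rw [uIcc_of_le hs14]
        rintro ⟨ha', hb'⟩; linarith
      have e0 : ∫ t in s..(1/4:ℝ), c / t = ∫ t in s..(1/4:ℝ), c * (1/t) :=
        intervalIntegral.integral_congr (fun t ht => by ring)
      rw [e0, intervalIntegral.integral_const_mul, integral_one_div h0m,
        Real.log_div (by norm_num) (ne_of_gt hs0)]
    have hnegint : ∫ t in s..(1/4:ℝ), -u' t = u s - u (1/4) := by
      rw [intervalIntegral.integral_neg, hftc2]; ring
    have hlogs : Real.log s ≤ X := by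
      calc Real.log s ≤ Real.log (Real.exp X) :=
        Real.log_le_log hs0 (min_le_left _ _)
      _ = X := Real.log_exp X
    have h7 : c * (Real.log (1/4) - X) = u 0 + 1 - u (1/4) := by
      rw [hX]
      field_simp
      ring
    have h8 : c * (Real.log (1/4) - X) ≤ c * (Real.log (1/4) - Real.log s) :=
      mul_le_mul_of_nonneg_left (by linarith) hcpos.le
    have husle : u s ≤ u 0 := hanti ⟨le_refl 0, by norm_num⟩ ⟨hs0.le, by linarith⟩ hs0.le
    rw [hloga, hnegint] at hmono2
    linarith
  have hC0le : C0 ≤ 0 := le_of_not_gt hC0np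
  have hGmono : MonotoneOn G (Ioo (0:ℝ) (1/2:ℝ)) := by
    intro x hx y hy hxy
    have hfc := hGftc x y hx.1 hxy (by linarith [hy.2])
    have hnn : 0 ≤ ∫ s in x..y, (1+α) * s ^ q * u s ^ (-γ) := by
      apply intervalIntegral.integral_nonneg hxy
      intro t htt
      have ht0 : 0 < t := lt_of_lt_of_le hx.1 htt.1
      have ht1 : t < 1 := by linarith [htt.2, hy.2]
      exact mul_nonneg (mul_nonneg hβ.le (Real.rpow_nonneg ht0.le _))
        (Real.rpow_nonneg (hpos t ⟨ht0.le, ht1⟩).le _)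
    have h2 : 0 ≤ G y - G x := by rw [hfc]; exact hnn
    linarith
  have hGsmall : ∀ t ∈ Ioo (0:ℝ) (1/2:ℝ), G t ≤ (1+α) * Mu * t ^ q * t := by
    intro t ht
    by_contra hcon
    push_neg at hcon
    have htq : 0 < t ^ q := Real.rpow_pos_of_pos ht.1 q
    have hpos' : 0 < (1+α) * Mu * t ^ q * t := mul_pos (mul_pos (mul_pos hβ hMupos) htq) ht.1
    have hlt : C0 < G t - (1+α) * Mu * t ^ q * t := lt_of_le_of_lt hC0le (by linarith)
    have hne : (G '' Ioo (0:ℝ) (1/2:ℝ)).Nonempty :=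
      ⟨G (1/4), mem_image_of_mem _ (by constructor <;> norm_num)⟩
    obtain ⟨w0, hw0mem, hw0lt⟩ := exists_lt_of_csInf_lt hne hlt
    obtain ⟨s', hs', rfl⟩ := hw0mem
    rcases le_or_gt s' t with hcase | hcase
    · have hfc := hGftc s' t hs'.1 hcase (by linarith [ht.2])
      have hb : ∫ x in s'..t, (1+α) * x ^ q * u x ^ (-γ)
          ≤ ∫ x in s'..t, (1+α) * t ^ q * Mu := by
        apply intervalIntegral.integral_mono_on hcase
          (hGint s' t hs'.1 hcase (by linarith [ht.2])) intervalIntegrable_const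
        intro x hx
        have hx0 : 0 < x := lt_of_lt_of_le hs'.1 hx.1
        have e1 : x ^ q ≤ t ^ q := Real.rpow_le_rpow hx0.le hx.2 hqpos.le
        have e2 : u x ^ (-γ) ≤ Mu := hUb x hx0 (by linarith [hx.2, ht.2])
        have e3 : 0 ≤ u x ^ (-γ) :=
          Real.rpow_nonneg (hpos x ⟨hx0.le, by linarith [hx.2, ht.2]⟩).le _
        exact mul_le_mul (mul_le_mul le_rfl e1 (Real.rpow_nonneg hx0.le _) hβ.le) e2 e3
          (by positivity)
      rw [intervalIntegral.integral_const, smul_eq_mul] at hb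
      have e4 : (t - s') * ((1+α) * t ^ q * Mu) ≤ (1+α) * Mu * t ^ q * t := by
        nlinarith [hs'.1, mul_pos (mul_pos hβ hMupos) htq]
      linarith
    · have := hGmono ht hs' hcase.le
      linarith
  have hu'b : ∀ t ∈ Ioo (0:ℝ) (1/2:ℝ), -u' t ≤ ((1+α) * Mu * t) ^ (1+α)⁻¹ := by
    intro t ht
    have ht1 : t < 1 := by linarith [ht.2]
    have ha : 0 < -u' t := by linarith [hneg t ⟨ht.1, ht1⟩]
    have htq : 0 < t ^ q := Real.rpow_pos_of_pos ht.1 q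
    have h2 : (-u' t) ^ (1+α) ≤ (1+α) * Mu * t := by
      have h3 := hGsmall t ht
      have h4 : t ^ q * (-u' t) ^ (1+α) ≤ t ^ q * ((1+α) * Mu * t) := by
        calc t ^ q * (-u' t) ^ (1+α) = G t := by simp only [hG]
        _ ≤ (1+α) * Mu * t ^ q * t := h3
        _ = t ^ q * ((1+α) * Mu * t) := by ring
      exact le_of_mul_le_mul_left h4 htq
    calc -u' t = ((-u' t) ^ (1+α)) ^ (1+α)⁻¹ := (Real.rpow_rpow_inv ha.le (ne_of_gt hβ)).symm
    _ ≤ ((1+α) * Mu * t) ^ (1+α)⁻¹ :=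
      Real.rpow_le_rpow (Real.rpow_nonneg ha.le _) h2 (by positivity)
  have hu'0 : Tendsto u' (𝓝[>] (0:ℝ)) (𝓝 0) := by
    have hb1 : Tendsto (fun t : ℝ => (1+α) * Mu * t) (𝓝[>] (0:ℝ)) (𝓝 0) := by
      have hcts : Continuous (fun t : ℝ => (1+α) * Mu * t) := by continuity
      have h5 := hcts.tendsto 0
      simpa using h5.mono_left nhdsWithin_le_nhds
    have hb0 : Tendsto (fun t : ℝ => ((1+α) * Mu * t) ^ (1+α)⁻¹) (𝓝[>] (0:ℝ)) (𝓝 0) := by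
      have := hb1.rpow_const (p := (1+α)⁻¹) (Or.inr (by positivity))
      simpa [Real.zero_rpow (show ((1+α)⁻¹ : ℝ) ≠ 0 by positivity)] using this
    have hb0' : Tendsto (fun t : ℝ => -(((1+α) * Mu * t) ^ (1+α)⁻¹)) (𝓝[>] (0:ℝ)) (𝓝 0) := by
      simpa using hb0.neg
    apply tendsto_of_tendsto_of_tendsto_of_le_of_le' hb0' tendsto_const_nhds
    · filter_upwards [Ioo_mem_nhdsGT (by norm_num : (0:ℝ) < 1/2)] with t ht
      have := hu'b t ht; linarith
    · filter_upwards [Ioo_mem_nhdsGT (by norm_num : (0:ℝ) < 1/2)] with t ht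
      exact (hneg t ⟨ht.1, by linarith [ht.2]⟩).le
  -- construct the C¹ extension
  classical
  set v : ℝ → ℝ := fun r => if r < 1 then u r else 0 with hv
  set w : ℝ → ℝ := fun r => if r ≤ 0 then 0 else if r < 1 then u' r else D1 with hw
  have hvd : ∀ x ∈ Ioo (0:ℝ) 1, HasDerivAt v (u' x) x := by
    intro x hx
    apply (hd1 x hx).congr_of_eventuallyEq
    filter_upwards [Ioo_mem_nhds hx.1 hx.2] with y hy
    simp only [hv]
    rw [if_pos hy.2]
  have hvdiff : DifferentiableOn ℝ v (Ioo (0:ℝ) 1) := fun x hx =>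
    ((hvd x hx).differentiableAt).differentiableWithinAt
  have h0der : HasDerivWithinAt v 0 (Ici 0) 0 := by
    apply hasDerivWithinAt_Ici_of_tendsto_deriv hvdiff ?_
      (Ioo_mem_nhdsGT (by norm_num : (0:ℝ) < 1)) ?_
    · have hcw : ContinuousWithinAt u (Ico (0:ℝ) 1) 0 := hcont 0 ⟨le_refl 0, by norm_num⟩
      apply (hcw.mono Ioo_subset_Ico_self).congr
      · intro y hy; simp only [hv]; rw [if_pos hy.2]
      · simp only [hv]; rw [if_pos (by norm_num : (0:ℝ) < 1)]
    · apply Filter.Tendsto.congr' _ hu'0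
      filter_upwards [Ioo_mem_nhdsGT (by norm_num : (0:ℝ) < 1)] with y hy
      exact ((hvd y hy).deriv).symm
  have h1der : HasDerivWithinAt v D1 (Iic 1) 1 := by
    apply hasDerivWithinAt_Iic_of_tendsto_deriv hvdiff ?_
      (Ioo_mem_nhdsLT (by norm_num : (0:ℝ) < 1)) ?_
    · have hv1 : v 1 = 0 := by simp only [hv]; rw [if_neg (lt_irrefl 1)]
      unfold ContinuousWithinAt
      rw [hv1]
      apply Filter.Tendsto.congr' _ (h1.mono_left (nhdsWithin_mono _ Ioo_subset_Iio_self))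
      filter_upwards [self_mem_nhdsWithin] with y hy
      simp only [hv]
      rw [if_pos hy.2]
    · apply Filter.Tendsto.congr' _ hu'1
      filter_upwards [Ioo_mem_nhdsLT (by norm_num : (0:ℝ) < 1)] with y hy
      exact ((hvd y hy).deriv).symm
  have hvw : ∀ x ∈ Icc (0:ℝ) 1, HasDerivWithinAt v (w x) (Icc 0 1) x := by
    intro x hx
    rcases eq_or_lt_of_le hx.1 with h0x | h0x
    · have hx0 : x = 0 := h0x.symm
      subst hx0
      have hw0 : w 0 = 0 := by simp only [hw]; rw [if_pos le_rfl]
      rw [hw0]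
      exact h0der.mono Icc_subset_Ici_self
    rcases eq_or_lt_of_le hx.2 with hx1 | hx1
    · subst hx1
      have hw1 : w 1 = D1 := by
        simp only [hw]
        rw [if_neg (by norm_num : ¬ (1:ℝ) ≤ 0), if_neg (lt_irrefl 1)]
      rw [hw1]
      exact h1der.mono Icc_subset_Iic_self
    · have hw' : w x = u' x := by
        simp only [hw]
        rw [if_neg (not_le.mpr h0x), if_pos hx1]
      rw [hw']
      exact (hvd x ⟨h0x, hx1⟩).hasDerivWithinAt
  have hwcont : ContinuousOn w (Icc (0:ℝ) 1) := by
    intro x hx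
    rcases eq_or_lt_of_le hx.1 with h0x | h0x
    · have hx0 : x = 0 := h0x.symm
      subst hx0
      have hw0 : w 0 = 0 := by simp only [hw]; rw [if_pos le_rfl]
      have key : ContinuousWithinAt w (Ioi (0:ℝ)) 0 := by
        unfold ContinuousWithinAt
        rw [hw0]
        apply Filter.Tendsto.congr' _ hu'0
        filter_upwards [Ioo_mem_nhdsGT (by norm_num : (0:ℝ) < 1)] with y hy
        simp only [hw]
        rw [if_neg (not_le.mpr hy.1), if_pos hy.2]
      have h2 : ContinuousWithinAt w (insert (0:ℝ) (Ioi (0:ℝ))) 0 :=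
        key.insert
      apply h2.mono
      intro y hy
      rcases eq_or_lt_of_le hy.1 with h' | h'
      · exact Or.inl h'.symm
      · exact Or.inr h'
    rcases eq_or_lt_of_le hx.2 with hx1 | hx1
    · subst hx1
      have hw1 : w 1 = D1 := by
        simp only [hw]
        rw [if_neg (by norm_num : ¬ (1:ℝ) ≤ 0), if_neg (lt_irrefl 1)]
      have key : ContinuousWithinAt w (Iio (1:ℝ)) 1 := by
        unfold ContinuousWithinAt
        rw [hw1]
        apply Filter.Tendsto.congr' _ hu'1
        filter_upwards [Ioo_mem_nhdsLT (by norm_num : (0:ℝ) < 1)] with y hy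
        simp only [hw]
        rw [if_neg (not_le.mpr hy.1), if_pos hy.2]
      have h2 : ContinuousWithinAt w (insert (1:ℝ) (Iio (1:ℝ))) 1 :=
        key.insert
      apply h2.mono
      intro y hy
      rcases eq_or_lt_of_le hy.2 with h' | h'
      · exact Or.inl h'
      · exact Or.inr h'
    · have hcx : ContinuousAt u' x := (hd2 x ⟨h0x, hx1⟩).continuousAt
      have heqx : w =ᶠ[𝓝 x] u' := by
        filter_upwards [Ioo_mem_nhds h0x hx1] with y hy
        simp only [hw]
        rw [if_neg (not_le.mpr hy.1), if_pos hy.2]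
      exact ((continuousAt_congr heqx).mpr hcx).continuousWithinAt
  refine ⟨v, ?_, fun r hr => by simp only [hv]; rw [if_pos hr.2]⟩
  have hudo : UniqueDiffOn ℝ (Icc (0:ℝ) 1) := uniqueDiffOn_Icc (by norm_num)
  rw [show (1 : WithTop ℕ∞) = 0 + 1 by norm_num, contDiffOn_succ_iff_derivWithin hudo]
  refine ⟨fun x hx => (hvw x hx).differentiableWithinAt, by simp, ?_⟩
  rw [contDiffOn_zero]
  apply hwcont.congr
  intro x hx
  exact (hvw x hx).derivWithin (hudo x hx)
end
end
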